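/- Let N and N' be positive integers, let λ, μ be partitions of N and λ', μ' partitions of N' (parts listed in weakly decreasing order) such that μ_1 ≥ N/2 and μ'_1 ≥ N'/2, and such that λ_i = λ'_i and μ_i = μ'_i for all i ≥ 2 (i.e., λ and λ' have the same partition after removing their largest part, and likewise μ and μ'). Then the Kostka numbers satisfy K_{λμ} = K_{λ'μ'}. -/

import Mathlib

/-- `p` is a partition of `N`, with parts `p 0 ≥ p 1 ≥ ⋯` (indexed from `0`, so the
largest part is `p 0`), all parts beyond index `N` being zero. -/
def IsPartitionOf (N : ℕ) (p : ℕ → ℕ) : Prop :=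
  Antitone p ∧ (∑ i ∈ Finset.range N, p i) = N ∧ ∀ i, N ≤ i → p i = 0

/-- `T` is a semistandard Young tableau of shape `p` and weight `w`, where `p` and `w`
are partitions of `N`: entries are positive integers inside the diagram of `p`
(and `0` outside), rows are weakly increasing, columns are strictly increasing, and the
value `v ≥ 1` occurs exactly `w (v-1)` times (`w (v-1)` is the `v`-th part `w_v`). -/
def IsSSYTOfWeight (N : ℕ) (p w : ℕ → ℕ) (T : ℕ → ℕ → ℕ) : Prop :=
  (∀ i j, p i ≤ j → T i j = 0) ∧
  (∀ i j, j < p i → 1 ≤ T i j) ∧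
  (∀ i j j', j ≤ j' → j' < p i → T i j ≤ T i j') ∧
  (∀ i i' j, i < i' → j < p i' → T i j < T i' j) ∧
  (∀ v, 1 ≤ v →
    (((Finset.range N) ×ˢ (Finset.range N)).filter
      (fun c => c.2 < p c.1 ∧ T c.1 c.2 = v)).card = w (v - 1))

/-- The Kostka number `K_{p,w}`: the number of semistandard Young tableaux of shape `p`
and weight `w`. -/
noncomputable def kostka (N : ℕ) (p w : ℕ → ℕ) : ℕ :=
  Nat.card {T : ℕ → ℕ → ℕ // IsSSYTOfWeight N p w T}

namespace KostkaAux

/-- the row-0 shifting map -/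
def shiftT (s s' L' : ℕ) (T : ℕ → ℕ → ℕ) : ℕ → ℕ → ℕ :=
  fun i j => if i = 0 then (if j < L' then (if j < s' then 1 else T 0 (j - s' + s)) else 0)
             else T i j

lemma ssyt_lower {N : ℕ} {p w : ℕ → ℕ} {T : ℕ → ℕ → ℕ} (hp : Antitone p)
    (hT : IsSSYTOfWeight N p w T) : ∀ i j, j < p i → i + 1 ≤ T i j := by
  intro i
  induction i with
  | zero => intro j hj; exact hT.2.1 0 j hj
  | succ n ih =>
    intro j hj
    have hj' : j < p n := lt_of_lt_of_le hj (hp (Nat.le_succ n))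
    have h1 := ih j hj'
    have h2 := hT.2.2.2.1 n (n + 1) j (Nat.lt_succ_self n) hj
    omega

lemma part_le {N : ℕ} {p : ℕ → ℕ} (hN : 0 < N) (hp : IsPartitionOf N p) (i : ℕ) :
    p i ≤ N := by
  rcases Nat.lt_or_ge i N with h | h
  · calc p i ≤ ∑ k ∈ Finset.range N, p k :=
        Finset.single_le_sum (fun k _ => Nat.zero_le _) (Finset.mem_range.mpr h)
      _ = N := hp.2.1
  · simp [hp.2.2 i h]

lemma two_rows_le {N : ℕ} {p : ℕ → ℕ} (hN : 0 < N) (hp : IsPartitionOf N p) :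
    p 0 + p 1 ≤ N := by
  rcases Nat.lt_or_ge N 2 with h | h
  · have h1 : p 1 = 0 := hp.2.2 1 (by omega)
    have := part_le hN hp 0
    omega
  · have e1 : p 0 + p 1 = ∑ i ∈ ({0, 1} : Finset ℕ), p i := by
      rw [Finset.sum_pair (by norm_num)]
    have e2 : ∑ i ∈ ({0, 1} : Finset ℕ), p i ≤ ∑ i ∈ Finset.range N, p i := by
      apply Finset.sum_le_sum_of_subset
      intro x hx
      simp only [Finset.mem_insert, Finset.mem_singleton] at hx
      simp only [Finset.mem_range]
      omega
    rw [hp.2.1] at e2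
    omega

/-- all 1's occupy exactly the first `m 0` cells of row 0 -/
lemma ones_iff {N : ℕ} {l m : ℕ → ℕ} {T : ℕ → ℕ → ℕ} (hN : 0 < N)
    (hl : IsPartitionOf N l) (hm : IsPartitionOf N m)
    (hT : IsSSYTOfWeight N l m T) :
    ∀ j, (j < l 0 ∧ T 0 j = 1) ↔ j < m 0 := by
  classical
  have hl0N : l 0 ≤ N := part_le hN hl 0
  set S : Finset ℕ := (Finset.range N).filter (fun j => j < l 0 ∧ T 0 j = 1) with hS
  have hcard : S.card = m 0 := by
    have h1 := hT.2.2.2.2 1 le_rfl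
    have hset : ((Finset.range N) ×ˢ (Finset.range N)).filter
        (fun c => c.2 < l c.1 ∧ T c.1 c.2 = 1) = ({0} : Finset ℕ) ×ˢ S := by
      ext ⟨i, j⟩
      simp only [Finset.mem_filter, Finset.mem_product, Finset.mem_range,
        Finset.mem_singleton, hS]
      constructor
      · rintro ⟨⟨hi, hj⟩, hjl, hv⟩
        rcases Nat.eq_zero_or_pos i with rfl | hpos
        · exact ⟨rfl, hj, hjl, hv⟩
        · have := ssyt_lower hl.1 hT i j hjl
          omega
      · rintro ⟨rfl, hj, hjl, hv⟩
        exact ⟨⟨hN, hj⟩, hjl, hv⟩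
    rw [hset] at h1
    simpa using h1
  have hdc : ∀ j j', j ≤ j' → j' ∈ S → j ∈ S := by
    intro j j' hle hj'
    simp only [hS, Finset.mem_filter, Finset.mem_range] at hj' ⊢
    obtain ⟨h1, h2, h3⟩ := hj'
    have hjl : j < l 0 := lt_of_le_of_lt hle h2
    have := hT.2.2.1 0 j j' hle h2
    have := hT.2.1 0 j hjl
    exact ⟨by omega, hjl, by omega⟩
  have hmem : ∀ j, j ∈ S ↔ j < m 0 := by
    intro j
    constructor
    · intro hj
      have hsub : Finset.range (j + 1) ⊆ S := by
        intro k hk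
        exact hdc k j (by simpa [Nat.lt_succ_iff] using hk) hj
      have := Finset.card_le_card hsub
      simp [hcard] at this
      omega
    · intro hj
      by_contra hjS
      have hsub : S ⊆ Finset.range j := by
        intro j' hj'
        simp only [Finset.mem_range]
        by_contra hc
        exact hjS (hdc j j' (by omega) hj')
      have := Finset.card_le_card hsub
      simp [hcard] at this
      omega
  intro j
  rw [← hmem j]
  simp only [hS, Finset.mem_filter, Finset.mem_range]
  constructor
  · rintro ⟨h1, h2⟩; exact ⟨by omega, h1, h2⟩
  · rintro ⟨_, h1, h2⟩; exact ⟨h1, h2⟩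

lemma key (N N' : ℕ) (hN : 0 < N) (hN' : 0 < N')
    (l m l' m' : ℕ → ℕ)
    (hl : IsPartitionOf N l) (hm : IsPartitionOf N m)
    (hl' : IsPartitionOf N' l') (hm' : IsPartitionOf N' m')
    (hm1 : N ≤ 2 * m 0) (hm1' : N' ≤ 2 * m' 0)
    (htail_l : ∀ i, 1 ≤ i → l i = l' i) (htail_m : ∀ i, 1 ≤ i → m i = m' i)
    (T : ℕ → ℕ → ℕ) (hT : IsSSYTOfWeight N l m T) :
    IsSSYTOfWeight N' l' m' (shiftT (m 0) (m' 0) (l' 0) T) := by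
  classical
  obtain ⟨hT0, hTpos, hTrow, hTcol, hTw⟩ := hT
  have hT' : IsSSYTOfWeight N l m T := ⟨hT0, hTpos, hTrow, hTcol, hTw⟩
  have hones := ones_iff hN hl hm hT'
  -- basic bounds
  have hl0N : l 0 ≤ N := part_le hN hl 0
  have hl'0N' : l' 0 ≤ N' := part_le hN' hl' 0
  have hm0N : m 0 ≤ N := part_le hN hm 0
  have hm'0N' : m' 0 ≤ N' := part_le hN' hm' 0
  have hm0l0 : m 0 ≤ l 0 := by
    have h1 : 0 < m 0 := by omega
    have := (hones (m 0 - 1)).mpr (by omega)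
    omega
  -- tail sums
  set K := N + N' with hK
  have hsum : ∀ (M : ℕ) (p : ℕ → ℕ), 0 < M → M ≤ K → IsPartitionOf M p →
      p 0 + (∑ i ∈ Finset.Ico 1 K, p i) = M := by
    intro M p hM hMK hp
    have h1 : ∑ i ∈ Finset.range K, p i = M := by
      rw [← hp.2.1]
      refine (Finset.sum_subset (Finset.range_subset_range.mpr hMK) ?_).symm
      intro x _ hx
      exact hp.2.2 x (by simpa using hx)
    have h2 : Finset.range K = insert 0 (Finset.Ico 1 K) := by
      ext x
      simp only [Finset.mem_range, Finset.mem_insert, Finset.mem_Ico]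
      omega
    rw [h2, Finset.sum_insert (by simp)] at h1
    exact h1
  have hSl := hsum N l hN (by omega) hl
  have hSm := hsum N m hN (by omega) hm
  have hSl' := hsum N' l' hN' (by omega) hl'
  have hSm' := hsum N' m' hN' (by omega) hm'
  have htl : (∑ i ∈ Finset.Ico 1 K, l i) = ∑ i ∈ Finset.Ico 1 K, l' i :=
    Finset.sum_congr rfl (fun i hi => htail_l i (Finset.mem_Ico.mp hi).1)
  have htm : (∑ i ∈ Finset.Ico 1 K, m i) = ∑ i ∈ Finset.Ico 1 K, m' i :=
    Finset.sum_congr rfl (fun i hi => htail_m i (Finset.mem_Ico.mp hi).1)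
  rw [htl] at hSl; rw [htm] at hSm
  have hm'l' : m' 0 ≤ l' 0 := by omega
  have hdiff : l 0 - m 0 = l' 0 - m' 0 := by omega
  have hdiff2 : l 0 + m' 0 = l' 0 + m 0 := by omega
  -- row lengths beyond row 0
  have h2r : l 0 + l 1 ≤ N := two_rows_le hN hl
  have h2r' : l' 0 + l' 1 ≤ N' := two_rows_le hN' hl'
  have hl1 : l 1 ≤ m 0 := by
    have := hl.1 (show (0:ℕ) ≤ 1 by omega)
    omega
  have hl'1 : l' 1 ≤ m' 0 := by
    have := hl'.1 (show (0:ℕ) ≤ 1 by omega)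
    omega
  have hlow := ssyt_lower hl.1 hT'
  have htwo : ∀ j, m 0 ≤ j → j < l 0 → 2 ≤ T 0 j := by
    intro j h1 h2
    have h3 := hTpos 0 j h2
    have h4 : ¬ (j < m 0) := by omega
    have := (hones j)
    omega
  -- notation
  set s := m 0 with hs
  set s' := m' 0 with hs'
  set T' := shiftT s s' (l' 0) T with hT'def
  have Tdef0 : ∀ j, T' 0 j = if j < l' 0 then (if j < s' then 1 else T 0 (j - s' + s)) else 0 := by
    intro j; simp [hT'def, shiftT]
  have Tdefi : ∀ i j, i ≠ 0 → T' i j = T i j := by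
    intro i j hi; simp [hT'def, shiftT, hi]
  refine ⟨?_, ?_, ?_, ?_, ?_⟩
  · -- zero outside
    intro i j hij
    rcases Nat.eq_zero_or_pos i with rfl | hi
    · rw [Tdef0]; exact if_neg (by omega)
    · rw [Tdefi i j (by omega)]
      exact hT0 i j (by rw [htail_l i (by omega)]; exact hij)
  · -- positive inside
    intro i j hij
    rcases Nat.eq_zero_or_pos i with rfl | hi
    · rw [Tdef0, if_pos hij]
      rcases Nat.lt_or_ge j s' with h2 | h2
      · rw [if_pos h2]
      · rw [if_neg (show ¬ j < s' by omega)]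
        exact hTpos 0 (j - s' + s) (by omega)
    · rw [Tdefi i j (by omega)]
      exact hTpos i j (by rw [← htail_l i (by omega)] at hij; exact hij)
  · -- rows weakly increasing
    intro i j j' hjj hj'
    rcases Nat.eq_zero_or_pos i with rfl | hi
    · rw [Tdef0, Tdef0, if_pos hj', if_pos (show j < l' 0 by omega)]
      rcases Nat.lt_or_ge j s' with h2 | h2
      · rw [if_pos h2]
        rcases Nat.lt_or_ge j' s' with h1 | h1
        · rw [if_pos h1]
        · rw [if_neg (show ¬ j' < s' by omega)]
          exact hTpos 0 (j' - s' + s) (by omega)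
      · rw [if_neg (show ¬ j < s' by omega), if_neg (show ¬ j' < s' by omega)]
        exact hTrow 0 (j - s' + s) (j' - s' + s) (by omega) (by omega)
    · rw [Tdefi i j (by omega), Tdefi i j' (by omega)]
      exact hTrow i j j' hjj (by rw [← htail_l i (by omega)] at hj'; exact hj')
  · -- columns strictly increasing
    intro i i' j hii hj
    have hi' : 1 ≤ i' := by omega
    have hjl : j < l i' := by rw [htail_l i' hi']; exact hj
    rcases Nat.eq_zero_or_pos i with rfl | hi
    · rw [Tdef0, Tdefi i' j (by omega)]
      have hja : j < l' 1 := lt_of_lt_of_le hj (hl'.1 hi')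
      rw [if_pos (show j < l' 0 by omega), if_pos (show j < s' by omega)]
      have := hlow i' j hjl
      omega
    · rw [Tdefi i j (by omega), Tdefi i' j (by omega)]
      exact hTcol i i' j hii hjl
  · -- weights
    intro v hv
    rcases Nat.eq_or_lt_of_le hv with h1 | hv2
    · -- v = 1
      have hset : ((Finset.range N') ×ˢ (Finset.range N')).filter
          (fun c => c.2 < l' c.1 ∧ T' c.1 c.2 = v) = ({0} : Finset ℕ) ×ˢ Finset.range s' := by
        ext ⟨i, j⟩
        simp only [Finset.mem_filter, Finset.mem_product, Finset.mem_range,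
          Finset.mem_singleton]
        constructor
        · rintro ⟨⟨hi, hj⟩, hjl, hval⟩
          rcases Nat.eq_zero_or_pos i with rfl | hpos
          · refine ⟨rfl, ?_⟩
            rw [Tdef0, if_pos hjl] at hval
            by_contra hc
            rw [if_neg (show ¬ j < s' by omega)] at hval
            have := htwo (j - s' + s) (by omega) (by omega)
            omega
          · rw [Tdefi i j (by omega)] at hval
            have := hlow i j (by rw [htail_l i (by omega)]; exact hjl)
            omega
        · rintro ⟨rfl, hj⟩
          refine ⟨⟨hN', by omega⟩, by omega, ?_⟩
          rw [Tdef0, if_pos (show j < l' 0 by omega), if_pos hj]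
          omega
      rw [hset]
      simp [← h1]
      exact hs'
    · -- v ≥ 2
      have hcA := hTw v hv
      have himg1 : ∀ x : ℕ, (fun c : ℕ × ℕ => if c.1 = 0 then ((0:ℕ), c.2 - s + s') else c) (0, x)
          = (0, x - s + s') := by intro x; simp
      have himg2 : ∀ x : ℕ, (fun c : ℕ × ℕ => if c.1 = 0 then ((0:ℕ), c.2 - s' + s) else c) (0, x)
          = (0, x - s' + s) := by intro x; simp
      have himg1' : ∀ x y : ℕ, x ≠ 0 →
          (fun c : ℕ × ℕ => if c.1 = 0 then ((0:ℕ), c.2 - s + s') else c) (x, y) = (x, y) := by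
        intro x y hx; simp [hx]
      have himg2' : ∀ x y : ℕ, x ≠ 0 →
          (fun c : ℕ × ℕ => if c.1 = 0 then ((0:ℕ), c.2 - s' + s) else c) (x, y) = (x, y) := by
        intro x y hx; simp [hx]
      have hcard : (((Finset.range N) ×ˢ (Finset.range N)).filter
            (fun c => c.2 < l c.1 ∧ T c.1 c.2 = v)).card
          = (((Finset.range N') ×ˢ (Finset.range N')).filter
            (fun c => c.2 < l' c.1 ∧ T' c.1 c.2 = v)).card := by
        apply Finset.card_nbij'
          (i := fun c => if c.1 = 0 then (0, c.2 - s + s') else c)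
          (j := fun c => if c.1 = 0 then (0, c.2 - s' + s) else c)
        · -- maps A into B
          rintro ⟨i, j⟩ hc
          simp only [Finset.mem_coe, Finset.mem_filter, Finset.mem_product, Finset.mem_range] at hc
          obtain ⟨⟨hi, hj⟩, hjl, hval⟩ := hc
          rcases Nat.eq_zero_or_pos i with rfl | hpos
          · show ((0:ℕ), j - s + s') ∈ _
            have hjs : s ≤ j := by
              by_contra hcon
              have := (hones j).mpr (by omega)
              omega
            simp only [Finset.mem_coe, Finset.mem_filter, Finset.mem_product, Finset.mem_range]
            refine ⟨⟨hN', by omega⟩, by omega, ?_⟩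
            rw [Tdef0, if_pos (show j - s + s' < l' 0 by omega),
              if_neg (show ¬ j - s + s' < s' by omega)]
            have heq : j - s + s' - s' + s = j := by omega
            rw [heq]; exact hval
          · have hni : ¬ ((i, j) : ℕ × ℕ).1 = 0 := by simp; omega
            beta_reduce
            rw [if_neg hni]
            have hli : l i = l' i := htail_l i (by omega)
            have hiN' : i < N' := by
              by_contra hcon
              have := hl'.2.2 i (by omega)
              omega
            have hl'i1 : l' i ≤ l' 1 := hl'.1 (by omega)
            simp only [Finset.mem_coe, Finset.mem_filter, Finset.mem_product, Finset.mem_range]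
            refine ⟨⟨hiN', by omega⟩, by omega, ?_⟩
            rw [Tdefi i j (by omega)]
            exact hval
        · -- maps B into A
          rintro ⟨i, j⟩ hc
          simp only [Finset.mem_coe, Finset.mem_filter, Finset.mem_product, Finset.mem_range] at hc
          obtain ⟨⟨hi, hj⟩, hjl, hval⟩ := hc
          rcases Nat.eq_zero_or_pos i with rfl | hpos
          · show ((0:ℕ), j - s' + s) ∈ _
            rw [Tdef0, if_pos hjl] at hval
            have hjs' : s' ≤ j := by
              by_contra hcon
              rw [if_pos (show j < s' by omega)] at hval
              omega
            rw [if_neg (show ¬ j < s' by omega)] at hval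
            simp only [Finset.mem_coe, Finset.mem_filter, Finset.mem_product, Finset.mem_range]
            exact ⟨⟨hN, by omega⟩, by omega, hval⟩
          · have hni : ¬ ((i, j) : ℕ × ℕ).1 = 0 := by simp; omega
            beta_reduce
            rw [if_neg hni]
            have hli : l i = l' i := htail_l i (by omega)
            have hiN : i < N := by
              by_contra hcon
              have := hl.2.2 i (by omega)
              omega
            have hl'i1 : l' i ≤ l' 1 := hl'.1 (by omega)
            simp only [Finset.mem_coe, Finset.mem_filter, Finset.mem_product, Finset.mem_range]
            refine ⟨⟨hiN, by omega⟩, by omega, ?_⟩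
            rw [Tdefi i j (by omega)] at hval
            exact hval
        · -- left inverse
          rintro ⟨i, j⟩ hc
          simp only [Finset.mem_coe, Finset.mem_filter, Finset.mem_product, Finset.mem_range] at hc
          obtain ⟨⟨hi, hj⟩, hjl, hval⟩ := hc
          rcases Nat.eq_zero_or_pos i with rfl | hpos
          · have hjs : s ≤ j := by
              by_contra hcon
              have := (hones j).mpr (by omega)
              omega
            show ((0:ℕ), j - s + s' - s' + s) = ((0:ℕ), j)
            have heq : j - s + s' - s' + s = j := by omega
            rw [heq]
          · have hni : ¬ ((i, j) : ℕ × ℕ).1 = 0 := by simp; omega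
            simp only [if_neg hni]
        · -- right inverse
          rintro ⟨i, j⟩ hc
          simp only [Finset.mem_coe, Finset.mem_filter, Finset.mem_product, Finset.mem_range] at hc
          obtain ⟨⟨hi, hj⟩, hjl, hval⟩ := hc
          rcases Nat.eq_zero_or_pos i with rfl | hpos
          · rw [Tdef0, if_pos hjl] at hval
            have hjs' : s' ≤ j := by
              by_contra hcon
              rw [if_pos (show j < s' by omega)] at hval
              omega
            show ((0:ℕ), j - s' + s - s + s') = ((0:ℕ), j)
            have heq : j - s' + s - s + s' = j := by omega
            rw [heq]
          · have hni : ¬ ((i, j) : ℕ × ℕ).1 = 0 := by simp; omega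
            simp only [if_neg hni]
      rw [← hcard, hcA]
      exact htail_m (v - 1) (by omega)

lemma keyinv (N N' : ℕ) (hN : 0 < N) (hN' : 0 < N')
    (l m l' m' : ℕ → ℕ)
    (hl : IsPartitionOf N l) (hm : IsPartitionOf N m)
    (hl' : IsPartitionOf N' l') (hm' : IsPartitionOf N' m')
    (hm1 : N ≤ 2 * m 0) (hm1' : N' ≤ 2 * m' 0)
    (htail_l : ∀ i, 1 ≤ i → l i = l' i) (htail_m : ∀ i, 1 ≤ i → m i = m' i)
    (T : ℕ → ℕ → ℕ) (hT : IsSSYTOfWeight N l m T) :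
    shiftT (m' 0) (m 0) (l 0) (shiftT (m 0) (m' 0) (l' 0) T) = T := by
  classical
  have hones := ones_iff hN hl hm hT
  have hl0N : l 0 ≤ N := part_le hN hl 0
  have hl'0N' : l' 0 ≤ N' := part_le hN' hl' 0
  have hm0N : m 0 ≤ N := part_le hN hm 0
  have hm'0N' : m' 0 ≤ N' := part_le hN' hm' 0
  have hm0l0 : m 0 ≤ l 0 := by
    have h1 : 0 < m 0 := by omega
    have := (hones (m 0 - 1)).mpr (by omega)
    omega
  set K := N + N' with hK
  have hsum : ∀ (M : ℕ) (p : ℕ → ℕ), 0 < M → M ≤ K → IsPartitionOf M p →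
      p 0 + (∑ i ∈ Finset.Ico 1 K, p i) = M := by
    intro M p hM hMK hp
    have h1 : ∑ i ∈ Finset.range K, p i = M := by
      rw [← hp.2.1]
      refine (Finset.sum_subset (Finset.range_subset_range.mpr hMK) ?_).symm
      intro x _ hx
      exact hp.2.2 x (by simpa using hx)
    have h2 : Finset.range K = insert 0 (Finset.Ico 1 K) := by
      ext x
      simp only [Finset.mem_range, Finset.mem_insert, Finset.mem_Ico]
      omega
    rw [h2, Finset.sum_insert (by simp)] at h1
    exact h1
  have hSl := hsum N l hN (by omega) hl
  have hSm := hsum N m hN (by omega) hm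
  have hSl' := hsum N' l' hN' (by omega) hl'
  have hSm' := hsum N' m' hN' (by omega) hm'
  have htl : (∑ i ∈ Finset.Ico 1 K, l i) = ∑ i ∈ Finset.Ico 1 K, l' i :=
    Finset.sum_congr rfl (fun i hi => htail_l i (Finset.mem_Ico.mp hi).1)
  have htm : (∑ i ∈ Finset.Ico 1 K, m i) = ∑ i ∈ Finset.Ico 1 K, m' i :=
    Finset.sum_congr rfl (fun i hi => htail_m i (Finset.mem_Ico.mp hi).1)
  rw [htl] at hSl; rw [htm] at hSm
  have hm'l' : m' 0 ≤ l' 0 := by omega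
  have hdiff : l 0 - m 0 = l' 0 - m' 0 := by omega
  set s := m 0 with hs
  set s' := m' 0 with hs'
  funext i j
  rcases Nat.eq_zero_or_pos i with rfl | hi
  · show (if (0:ℕ) = 0 then _ else _) = T 0 j
    rw [if_pos rfl]
    rcases Nat.lt_or_ge j (l 0) with hjl | hjl
    · rw [if_pos hjl]
      rcases Nat.lt_or_ge j s with hjs | hjs
      · rw [if_pos hjs]
        exact ((hones j).mpr hjs).2.symm
      · rw [if_neg (show ¬ j < s by omega)]
        show (if (0:ℕ) = 0 then _ else _) = T 0 j
        rw [if_pos rfl, if_pos (show j - s + s' < l' 0 by omega),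
          if_neg (show ¬ j - s + s' < s' by omega)]
        congr 1
        omega
    · rw [if_neg (show ¬ j < l 0 by omega)]
      exact (hT.1 0 j hjl).symm
  · show (if i = 0 then _ else _) = T i j
    rw [if_neg (show ¬ i = 0 by omega)]
    show (if i = 0 then _ else _) = T i j
    rw [if_neg (show ¬ i = 0 by omega)]

end KostkaAux

/-- Stability of Kostka numbers: if `μ₁ ≥ N/2` and `μ'₁ ≥ N'/2`, and `λ, λ'` (resp.
`μ, μ'`) agree after removing their largest parts, then `K_{λμ} = K_{λ'μ'}`. -/
theorem kostka_stable (N N' : ℕ) (hN : 0 < N) (hN' : 0 < N')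
    (l m l' m' : ℕ → ℕ)
    (hl : IsPartitionOf N l) (hm : IsPartitionOf N m)
    (hl' : IsPartitionOf N' l') (hm' : IsPartitionOf N' m')
    (hm1 : N ≤ 2 * m 0) (hm1' : N' ≤ 2 * m' 0)
    (htail_l : ∀ i, 1 ≤ i → l i = l' i) (htail_m : ∀ i, 1 ≤ i → m i = m' i) :
    kostka N l m = kostka N' l' m' := by
  unfold kostka
  apply Nat.card_congr
  exact
    { toFun := fun T => ⟨KostkaAux.shiftT (m 0) (m' 0) (l' 0) T.1,
        KostkaAux.key N N' hN hN' l m l' m' hl hm hl' hm' hm1 hm1' htail_l htail_m T.1 T.2⟩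
      invFun := fun T => ⟨KostkaAux.shiftT (m' 0) (m 0) (l 0) T.1,
        KostkaAux.key N' N hN' hN l' m' l m hl' hm' hl hm hm1' hm1
          (fun i hi => (htail_l i hi).symm) (fun i hi => (htail_m i hi).symm) T.1 T.2⟩
      left_inv := fun T => Subtype.ext
        (KostkaAux.keyinv N N' hN hN' l m l' m' hl hm hl' hm' hm1 hm1'
          htail_l htail_m T.1 T.2)
      right_inv := fun T => Subtype.ext
        (KostkaAux.keyinv N' N hN' hN l' m' l m hl' hm' hl hm hm1' hm1
          (fun i hi => (htail_l i hi).symm) (fun i hi => (htail_m i hi).symm) T.1 T.2) }
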